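/- Let f be a nonnegative integrable function on [-π, π] that vanishes almost everywhere on {λ : |λ| < α}, where 0 < α < π. Then limsup_{n→∞} (σ_n(f))^{1/n} ≤ cos(α/2), where σ_n²(f) is the minimum of ∫ |q_n(e^{iλ})|² f dλ over polynomials q_n of degree ≤ n with q_n(1)=1. -/

import Mathlib

open MeasureTheory

/-- The variance of the BLUE: the infimum of `∫ |q(e^{iλ})|² f(λ) dλ` over
polynomials `q` of degree at most `n` with `q(1) = 1`. -/
noncomputable def sigmaSq (h : ℝ → ℝ) (n : ℕ) : ℝ :=
  sInf {v : ℝ | ∃ q : Polynomial ℂ, q.natDegree ≤ n ∧ q.eval 1 = 1 ∧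
    v = ∫ t in (-Real.pi)..Real.pi, ‖q.eval (Complex.exp (Complex.I * t))‖ ^ 2 * h t}

lemma norm_exp_add_one (t : ℝ) : ‖Complex.exp (Complex.I * t) + 1‖ = 2 * |Real.cos (t / 2)| := by
  have h : Complex.exp (Complex.I * t) + 1
      = ((Real.cos t + 1 : ℝ) : ℂ) + (Real.sin t : ℝ) * Complex.I := by
    rw [show (Complex.I * (t:ℂ)) = (t:ℂ) * Complex.I by ring, Complex.exp_mul_I]
    push_cast [Complex.ofReal_cos, Complex.ofReal_sin]
    ring
  rw [h, Complex.norm_def, Complex.normSq_add_mul_I]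
  rw [show (Real.cos t + 1)^2 + Real.sin t ^2 = (2 * |Real.cos (t/2)|)^2 by
    have h1 := Real.sin_sq_add_cos_sq t
    have h2 := Real.cos_sq (t/2)
    rw [show 2*(t/2) = t by ring] at h2
    have h3 : |Real.cos (t/2)|^2 = Real.cos (t/2)^2 := sq_abs _
    nlinarith]
  exact Real.sqrt_sq (by positivity)

lemma sigmaSq_le (f : ℝ → ℝ) (α : ℝ) (hα : 0 < α) (hαπ : α < Real.pi)
    (hf0 : ∀ t, 0 ≤ f t)
    (hfi : IntervalIntegrable f volume (-Real.pi) Real.pi)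
    (hvan : ∀ᵐ t ∂volume, |t| < α → f t = 0) (n : ℕ) :
    sigmaSq f n ≤ Real.cos (α/2) ^ (2*n) * ∫ t in (-Real.pi)..Real.pi, f t := by
  have hpi : (-Real.pi) ≤ Real.pi := by linarith [Real.pi_pos]
  rw [sigmaSq]
  set q : Polynomial ℂ := (Polynomial.C (2⁻¹ : ℂ) * (Polynomial.X + 1)) ^ n with hq
  have heval : ∀ t : ℝ, ‖q.eval (Complex.exp (Complex.I * t))‖ ^ 2
      = |Real.cos (t/2)| ^ (2*n) := by
    intro t
    simp only [hq, Polynomial.eval_pow, Polynomial.eval_mul, Polynomial.eval_C,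
      Polynomial.eval_add, Polynomial.eval_X, Polynomial.eval_one, norm_pow, norm_mul]
    rw [norm_exp_add_one]
    rw [show ‖(2⁻¹ : ℂ)‖ = 2⁻¹ by norm_num]
    ring
  have hbb : BddBelow {v : ℝ | ∃ q : Polynomial ℂ, q.natDegree ≤ n ∧ q.eval 1 = 1 ∧
      v = ∫ t in (-Real.pi)..Real.pi, ‖q.eval (Complex.exp (Complex.I * t))‖ ^ 2 * f t} := by
    refine ⟨0, fun v hv => ?_⟩
    obtain ⟨p, _, _, rfl⟩ := hv
    exact intervalIntegral.integral_nonneg hpi (fun u _ => mul_nonneg (by positivity) (hf0 u))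
  have hmem : (∫ t in (-Real.pi)..Real.pi, ‖q.eval (Complex.exp (Complex.I * t))‖ ^ 2 * f t)
      ∈ {v : ℝ | ∃ q : Polynomial ℂ, q.natDegree ≤ n ∧ q.eval 1 = 1 ∧
      v = ∫ t in (-Real.pi)..Real.pi, ‖q.eval (Complex.exp (Complex.I * t))‖ ^ 2 * f t} := by
    refine ⟨q, ?_, ?_, rfl⟩
    · calc q.natDegree ≤ n * (Polynomial.C (2⁻¹ : ℂ) * (Polynomial.X + 1)).natDegree :=
          Polynomial.natDegree_pow_le
        _ ≤ n * 1 := by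
          gcongr
          have hx1 : (Polynomial.X + 1 : Polynomial ℂ).natDegree = 1 := by
            simpa using Polynomial.natDegree_X_add_C (1:ℂ)
          exact le_trans Polynomial.natDegree_mul_le (by simp [hx1])
        _ = n := mul_one n
    · simp [hq]
      norm_num
  refine le_trans (csInf_le hbb hmem) ?_
  rw [← intervalIntegral.integral_const_mul]
  have hi1 : IntervalIntegrable (fun t => ‖q.eval (Complex.exp (Complex.I * t))‖ ^ 2 * f t)
      volume (-Real.pi) Real.pi := by
    apply hfi.continuousOn_mul
    apply Continuous.continuousOn
    continuity
  have hi2 : IntervalIntegrable (fun t => Real.cos (α/2) ^ (2*n) * f t)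
      volume (-Real.pi) Real.pi := hfi.const_mul _
  apply intervalIntegral.integral_mono_ae_restrict hpi hi1 hi2
  have hvan' : ∀ᵐ t ∂(volume.restrict (Set.Icc (-Real.pi) Real.pi)), |t| < α → f t = 0 :=
    ae_restrict_of_ae hvan
  filter_upwards [hvan', ae_restrict_mem measurableSet_Icc] with t ht htmem
  rw [heval]
  rcases lt_or_ge (|t|) α with hlt | hge
  · rw [ht hlt]; simp
  · have habs : |Real.cos (t/2)| ≤ Real.cos (α/2) := by
      have h1 : Real.cos (t/2) = Real.cos (|t|/2) := by
        rcases abs_cases t with ⟨h, _⟩ | ⟨h, _⟩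
        · rw [h]
        · rw [h]; rw [show -t/2 = -(t/2) by ring, Real.cos_neg]
      rcases htmem with ⟨h2, h3⟩
      have habs2 : |t| ≤ Real.pi := abs_le.mpr ⟨h2, h3⟩
      have hnn : 0 ≤ Real.cos (|t|/2) := Real.cos_nonneg_of_mem_Icc
        ⟨by linarith [abs_nonneg t, Real.pi_pos], by linarith⟩
      rw [h1, abs_of_nonneg hnn]
      exact Real.cos_le_cos_of_nonneg_of_le_pi (by linarith) (by linarith [Real.pi_pos]) (by linarith)
    exact mul_le_mul_of_nonneg_right (pow_le_pow_left₀ (abs_nonneg _) habs _) (hf0 t)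

theorem stmt12 (f : ℝ → ℝ) (α : ℝ) (hα : 0 < α) (hαπ : α < Real.pi)
    (hf0 : ∀ t, 0 ≤ f t)
    (hfi : IntervalIntegrable f volume (-Real.pi) Real.pi)
    (hvan : ∀ᵐ t ∂volume, |t| < α → f t = 0) :
    Filter.limsup (fun n : ℕ => (Real.sqrt (sigmaSq f n)) ^ ((n : ℝ)⁻¹)) Filter.atTop
      ≤ Real.cos (α / 2) := by
  have hpi := Real.pi_pos
  set c := Real.cos (α / 2) with hcdef
  have hc : 0 < c := Real.cos_pos_of_mem_Ioo ⟨by linarith, by linarith⟩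
  set I := ∫ t in (-Real.pi)..Real.pi, f t with hIdef
  have hI : 0 ≤ I := intervalIntegral.integral_nonneg (by linarith) (fun u _ => hf0 u)
  set K := max (Real.sqrt I) 1 with hKdef
  have hK1 : (1:ℝ) ≤ K := le_max_right _ _
  have hK0 : (0:ℝ) < K := lt_of_lt_of_le one_pos hK1
  have hev : ∀ᶠ n : ℕ in Filter.atTop,
      (Real.sqrt (sigmaSq f n)) ^ ((n:ℝ)⁻¹) ≤ c * K ^ ((n:ℝ)⁻¹) := by
    filter_upwards [Filter.eventually_ge_atTop 1] with n hn
    have hn0 : (n:ℝ) ≠ 0 := by exact_mod_cast Nat.one_le_iff_ne_zero.mp hn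
    have h1 : sigmaSq f n ≤ c ^ (2*n) * I := sigmaSq_le f α hα hαπ hf0 hfi hvan n
    have h2 : Real.sqrt (sigmaSq f n) ≤ c ^ n * K := by
      calc Real.sqrt (sigmaSq f n) ≤ Real.sqrt (c ^ (2*n) * I) := Real.sqrt_le_sqrt h1
        _ = c ^ n * Real.sqrt I := by
            rw [show 2*n = n*2 by ring, pow_mul, Real.sqrt_mul (by positivity),
              Real.sqrt_sq (by positivity)]
        _ ≤ c ^ n * K := by
            have h3 := le_max_left (Real.sqrt I) 1
            have h4 : (0:ℝ) ≤ c ^ n := by positivity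
            exact mul_le_mul_of_nonneg_left h3 h4
    calc (Real.sqrt (sigmaSq f n)) ^ ((n:ℝ)⁻¹) ≤ (c ^ n * K) ^ ((n:ℝ)⁻¹) :=
        Real.rpow_le_rpow (Real.sqrt_nonneg _) h2 (by positivity)
      _ = c * K ^ ((n:ℝ)⁻¹) := by
        rw [Real.mul_rpow (by positivity) hK0.le, ← Real.rpow_natCast c n,
          ← Real.rpow_mul hc.le, mul_inv_cancel₀ hn0, Real.rpow_one]
  have hten : Filter.Tendsto (fun n : ℕ => c * K ^ ((n:ℝ)⁻¹)) Filter.atTop (nhds c) := by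
    have hcont : ContinuousAt (fun x : ℝ => K ^ x) 0 := Real.continuousAt_const_rpow hK0.ne'
    have h0 : Filter.Tendsto (fun n : ℕ => K ^ ((n:ℝ)⁻¹)) Filter.atTop (nhds 1) := by
      simpa [Real.rpow_zero, Function.comp_def] using hcont.tendsto.comp tendsto_inv_atTop_nhds_zero_nat
    simpa [mul_one] using tendsto_const_nhds.mul h0
  have hcb : Filter.IsCoboundedUnder (· ≤ ·) Filter.atTop
      (fun n : ℕ => (Real.sqrt (sigmaSq f n)) ^ ((n:ℝ)⁻¹)) :=
    Filter.isCoboundedUnder_le_of_le _ (fun n => Real.rpow_nonneg (Real.sqrt_nonneg _) _)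
  calc Filter.limsup (fun n : ℕ => (Real.sqrt (sigmaSq f n)) ^ ((n : ℝ)⁻¹)) Filter.atTop
      ≤ Filter.limsup (fun n : ℕ => c * K ^ ((n:ℝ)⁻¹)) Filter.atTop :=
        Filter.limsup_le_limsup hev hcb hten.isBoundedUnder_le
    _ = c := hten.limsup_eq
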